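/- For any positive integer d, consider the point set P = {e_1, …, e_d} of the first d standard basis vectors in ℝ^{2d}. For any k ≥ 1 and any set of k centers c_1, …, c_k ∈ ℝ^{2d}, each of Euclidean norm 1, it holds that ∑_{i=1}^d min_{j=1,…,k} ‖e_i − c_j‖² ≥ 2d − 2√(dk). -/

import Mathlib

/-- Any clustering of the first `d` standard basis vectors of `ℝ^{2d}`
with `k` unit-norm centers has cost at least `2d - 2√(dk)`. -/
theorem kmeans_unit_centers_lower_bound
    (d k : ℕ) (hd : 0 < d) (hk : 1 ≤ k)
    (c : Fin k → EuclideanSpace ℝ (Fin (2 * d)))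
    (hc : ∀ j, ‖c j‖ = 1) :
    (2 : ℝ) * d - 2 * Real.sqrt (d * k) ≤
      ∑ i : Fin d, ⨅ j : Fin k,
        ‖EuclideanSpace.single (Fin.castLE (by omega) i) (1 : ℝ) - c j‖ ^ 2 := by
  have hcast : d ≤ 2 * d := by omega
  have hne : Nonempty (Fin k) := ⟨⟨0, hk⟩⟩
  set e : Fin d → EuclideanSpace ℝ (Fin (2 * d)) :=
    fun i => EuclideanSpace.single (Fin.castLE hcast i) (1 : ℝ) with he
  -- choose nearest center
  choose σ hσ using fun i : Fin d =>
    Finite.exists_min (fun j : Fin k => ‖e i - c j‖ ^ 2)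
  have hinf : ∀ i : Fin d, (⨅ j : Fin k, ‖e i - c j‖ ^ 2) = ‖e i - c (σ i)‖ ^ 2 := by
    intro i
    refine le_antisymm (ciInf_le ?_ (σ i)) (le_ciInf (hσ i))
    exact Set.Finite.bddBelow (Set.finite_range _)
  calc (2 : ℝ) * d - 2 * Real.sqrt (d * k)
      ≤ ∑ i : Fin d, ‖e i - c (σ i)‖ ^ 2 := ?_
    _ = ∑ i : Fin d, ⨅ j : Fin k, ‖e i - c j‖ ^ 2 := by
        simp_rw [hinf]
  -- expand the squared norm
  have hterm : ∀ i : Fin d, ‖e i - c (σ i)‖ ^ 2 = 2 - 2 * c (σ i) (Fin.castLE hcast i) := by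
    intro i
    rw [norm_sub_sq_real, hc, he]
    have hip : inner ℝ (EuclideanSpace.single (Fin.castLE hcast i) (1 : ℝ)) (c (σ i))
        = c (σ i) (Fin.castLE hcast i) := by
      simp [EuclideanSpace.inner_single_left]
    rw [hip, EuclideanSpace.norm_single]
    norm_num
    ring
  simp_rw [hterm]
  rw [Finset.sum_sub_distrib, Finset.sum_const, ← Finset.mul_sum]
  simp only [Finset.card_univ, Fintype.card_fin, nsmul_eq_mul]
  have key : ∑ i : Fin d, c (σ i) (Fin.castLE hcast i) ≤ Real.sqrt (d * k) := by
    -- group by fiber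
    have hfib : ∑ i : Fin d, c (σ i) (Fin.castLE hcast i)
        = ∑ j : Fin k, ∑ i ∈ Finset.univ.filter (fun i => σ i = j),
            c j (Fin.castLE hcast i) := by
      rw [← Finset.sum_fiberwise Finset.univ σ (fun i => c (σ i) (Fin.castLE hcast i))]
      refine Finset.sum_congr rfl fun j _ => Finset.sum_congr rfl fun i hi => ?_
      simp only [Finset.mem_filter] at hi
      rw [hi.2]
    rw [hfib]
    set S : Fin k → Finset (Fin d) := fun j => Finset.univ.filter (fun i => σ i = j) with hS
    have step1 : ∀ j : Fin k, ∑ i ∈ S j, c j (Fin.castLE hcast i)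
        ≤ Real.sqrt ((S j).card) := by
      intro j
      have cs := Real.sum_mul_le_sqrt_mul_sqrt (S j) (fun _ => (1 : ℝ))
        (fun i => c j (Fin.castLE hcast i))
      simp only [one_mul, one_pow, Finset.sum_const, nsmul_eq_mul, mul_one] at cs
      have hsub : ∑ i ∈ S j, (c j (Fin.castLE hcast i)) ^ 2 ≤ 1 := by
        have himg : ∑ i ∈ S j, (c j (Fin.castLE hcast i)) ^ 2
            = ∑ m ∈ (S j).image (Fin.castLE hcast), (c j m) ^ 2 := by
          rw [Finset.sum_image (fun a _ b _ h => Fin.castLE_injective hcast h)]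
        have hall : ∑ m ∈ (S j).image (Fin.castLE hcast), (c j m) ^ 2
            ≤ ∑ m : Fin (2 * d), (c j m) ^ 2 :=
          Finset.sum_le_sum_of_subset_of_nonneg (Finset.subset_univ _)
            (fun m _ _ => sq_nonneg _)
        have hnorm : ∑ m : Fin (2 * d), (c j m) ^ 2 = 1 := by
          have := hc j
          rw [EuclideanSpace.norm_eq] at this
          have h2 : Real.sqrt (∑ m : Fin (2 * d), (c j m) ^ 2) = 1 := by
            simpa [sq_abs] using this
          nlinarith [Real.sq_sqrt (show (0:ℝ) ≤ ∑ m : Fin (2 * d), (c j m) ^ 2 from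
            Finset.sum_nonneg fun m _ => sq_nonneg _), h2]
        rw [himg]; rw [← hnorm] at *; exact hall
      calc ∑ i ∈ S j, c j (Fin.castLE hcast i)
          ≤ Real.sqrt ((S j).card) * Real.sqrt (∑ i ∈ S j, (c j (Fin.castLE hcast i)) ^ 2) := cs
        _ ≤ Real.sqrt ((S j).card) * 1 := by
            have h1 : Real.sqrt (∑ i ∈ S j, (c j (Fin.castLE hcast i)) ^ 2) ≤ 1 := by
              rw [show (1:ℝ) = Real.sqrt 1 by simp]
              exact Real.sqrt_le_sqrt hsub
            exact mul_le_mul_of_nonneg_left h1 (Real.sqrt_nonneg _)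
        _ = Real.sqrt ((S j).card) := mul_one _
    have step2 : ∑ j : Fin k, Real.sqrt ((S j).card) ≤ Real.sqrt (d * k) := by
      have cs := Real.sum_mul_le_sqrt_mul_sqrt (Finset.univ : Finset (Fin k))
        (fun _ => (1 : ℝ)) (fun j => Real.sqrt ((S j).card))
      simp only [one_mul, one_pow, Finset.sum_const, nsmul_eq_mul, mul_one,
        Finset.card_univ, Fintype.card_fin] at cs
      have hsq : ∀ j : Fin k, Real.sqrt ((S j).card) ^ 2 = ((S j).card : ℝ) := fun j =>
        Real.sq_sqrt (by positivity)
      simp_rw [hsq] at cs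
      have hcard : ∑ j : Fin k, ((S j).card : ℝ) = (d : ℝ) := by
        rw [← Nat.cast_sum]
        norm_cast
        have hcf := Finset.card_eq_sum_card_fiberwise
          (s := (Finset.univ : Finset (Fin d))) (t := (Finset.univ : Finset (Fin k)))
          (f := σ) (fun i _ => Finset.mem_univ (σ i))
        simpa using hcf.symm
      rw [hcard] at cs
      calc ∑ j : Fin k, Real.sqrt ((S j).card) ≤ Real.sqrt k * Real.sqrt d := cs
        _ = Real.sqrt (d * k) := by rw [← Real.sqrt_mul (by positivity), mul_comm]
    exact le_trans (Finset.sum_le_sum fun j _ => step1 j) step2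
  nlinarith [key]
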